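/- arXiv:1403.5952 — 5 statements merged into one kernel-verified Lean document; each statement's English description precedes it below -/
import Mathlib

section
/- (Equivalence with coalescing) Let E be the constraint system a_i ⊑ H_i(a_1,…,a_n) for monotone H_i : Lⁿ → L on a finite-height lattice L, with maximum solution (A_1,…,A_n). Suppose 1 ≤ m ≤ n and A_i = A_m for all 1 ≤ i ≤ m. Define the coalesced system E_coal on variables b_m,…,b_n by: for each 1 ≤ i ≤ m the constraint b_m ⊑ H_i(b_m,…,b_m,b_{m+1},…,b_n), and for each m < i ≤ n the constraint b_i ⊑ H_i(b_m,…,b_m,b_{m+1},…,b_n). Then the maximum solution of E_coal is (A_m, A_{m+1},…,A_n). -/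
/-- Equivalence with coalescing: if `A` is the maximum solution of the monotone
constraint system `a i ⊑ H i a` over a finite-height lattice, and the first
coordinates `A i` for `i ≤ m` all agree with `A m`, then coalescing those
variables into the single variable indexed by `m` (i.e., evaluating every `H i`
on the assignment `j ↦ b (max j m)`) yields a system whose maximum solution is
the corresponding restriction of `A`. -/
theorem stmt1 {L : Type*} [Lattice L] [OrderTop L] [WellFoundedGT L] {n : ℕ}
    (H : Fin n → (Fin n → L) → L) (hmono : ∀ i, Monotone (H i))
    (m : Fin n) (A : Fin n → L)
    (hsol : ∀ i, A i ≤ H i A)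
    (hmax : ∀ B : Fin n → L, (∀ i, B i ≤ H i B) → ∀ i, B i ≤ A i)
    (hcoal : ∀ i, i ≤ m → A i = A m) :
    (∀ i, A (max i m) ≤ H i fun j => A (max j m)) ∧
      ∀ b : Fin n → L, (∀ i, b (max i m) ≤ H i fun j => b (max j m)) →
        ∀ i, b (max i m) ≤ A (max i m) := by
  have hA : ∀ j, A (max j m) = A j := by
    intro j
    rcases le_total j m with h | h
    · rw [max_eq_right h, ← hcoal j h]
    · rw [max_eq_left h]
  constructor
  · intro i
    have : (fun j => A (max j m)) = A := funext hA
    rw [this, hA]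
    exact hsol i
  · intro b hb i
    have key := hmax (fun j => b (max j m)) ?_
    · rw [hA i]
      exact key i
    · intro k
      have := hb k
      simpa [max_assoc, max_self] using this
end

section
/- In a rooted directed graph where every node is reachable from the entry, the dominance relation (n dominates n' iff every path from the entry to n' passes through n) is a partial order, and the set of dominators of any node is totally ordered by dominance (so every node other than the entry has a unique immediate dominator). -/
/-- A path in a directed graph `E` from `a` to `b`, given as the list of
visited vertices. -/
def IsPath {V : Type*} (E : V → V → Prop) (l : List V) (a b : V) : Prop :=
  l.head? = some a ∧ l.getLast? = some b ∧ l.Chain' E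

/-- `n` dominates `n'` (w.r.t. `entry`): every path from the entry to `n'`
contains `n`. -/
def Dom {V : Type*} (E : V → V → Prop) (entry n n' : V) : Prop :=
  ∀ l, IsPath E l entry n' → n ∈ l

section aux

variable {V : Type*} {E : V → V → Prop} {entry : V}

/-- last-occurrence split -/
lemma split_last {a : V} : ∀ {l : List V}, a ∈ l → ∃ l₁ l₂, l = l₁ ++ a :: l₂ ∧ a ∉ l₂ := by
  intro l
  induction l with
  | nil => simp
  | cons x xs ih =>
    intro h
    by_cases hx : a ∈ xs
    · obtain ⟨l₁, l₂, h1, h2⟩ := ih hx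
      exact ⟨x :: l₁, l₂, by simp [h1], h2⟩
    · have hax : a = x := (List.mem_cons.1 h).resolve_right hx
      subst hax
      exact ⟨[], xs, rfl, hx⟩

/-- any split gives a path to the middle point -/
lemma prefix_path {l l₁ l₂ : List V} {c b : V} (h : IsPath E l entry c)
    (hl : l = l₁ ++ b :: l₂) : IsPath E (l₁ ++ [b]) entry b := by
  obtain ⟨h1, h2, h3⟩ := h
  refine ⟨?_, List.getLast?_concat, h3.prefix ?_⟩
  · cases l₁ with
    | nil => simpa [hl] using h1
    | cons x xs => simpa [hl] using h1
  · rw [hl]; exact ⟨l₂, by simp⟩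

lemma entry_mem {l : List V} {c : V} (h : IsPath E l entry c) : entry ∈ l :=
  List.mem_of_mem_head? (by rw [h.1]; rfl)

lemma target_mem {l : List V} {c : V} (h : IsPath E l entry c) : c ∈ l :=
  List.mem_of_getLast? h.2.1

/-- splice: path to b composed with suffix after b -/
lemma splice_path {l l₁ l₂ p : List V} {c b : V} (h : IsPath E l entry c)
    (hl : l = l₁ ++ b :: l₂) (hp : IsPath E p entry b) : IsPath E (p ++ l₂) entry c := by
  obtain ⟨h1, h2, h3⟩ := h
  obtain ⟨p1, p2, p3⟩ := hp
  have hpne : p ≠ [] := by rintro rfl; simp at p1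
  have hchain : List.Chain' E (b :: l₂) := h3.suffix (by rw [hl]; exact ⟨l₁, rfl⟩)
  refine ⟨?_, ?_, ?_⟩
  · rw [List.head?_append_of_ne_nil _ hpne]; exact p1
  · cases l₂ with
    | nil =>
      have : c = b := by
        have := h2; rw [hl] at this; simp [List.getLast?_concat] at this
        exact this.symm
      simpa [this] using p2
    | cons y ys =>
      rw [List.getLast?_append]
      have : (y :: ys).getLast? = some c := by
        have := h2; rw [hl] at this
        rw [List.getLast?_append] at this
        simpa using this
      simp [this]
  · refine p3.append (List.isChain_cons.1 hchain).2 ?_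
    intro x hx y hy
    simp [p2] at hx
    subst hx
    exact (List.isChain_cons.1 hchain).1 y hy

lemma dom_refl (n : V) : Dom E entry n n := fun _ h => target_mem h

lemma dom_entry (n : V) : Dom E entry entry n := fun _ h => entry_mem h

lemma dom_trans {a b c : V} (hab : Dom E entry a b) (hbc : Dom E entry b c) :
    Dom E entry a c := by
  intro l hl
  obtain ⟨l₁, l₂, rfl, -⟩ := List.append_of_mem (hbc l hl)
  have := hab _ (prefix_path hl rfl)
  rcases List.mem_append.1 this with h | h
  · exact List.mem_append.2 (Or.inl h)
  · simp at h; simp [h]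

lemma dom_antisymm (hreach : ∀ v, ∃ l, IsPath E l entry v) {a b : V}
    (hab : Dom E entry a b) (hba : Dom E entry b a) : a = b := by
  by_contra hne
  -- minimal length path to a
  set s : Set ℕ := {n | ∃ l, IsPath E l entry a ∧ l.length = n} with hs
  have hsne : s.Nonempty := by obtain ⟨l, hl⟩ := hreach a; exact ⟨l.length, l, hl, rfl⟩
  obtain ⟨l, hl, hlen⟩ := Nat.sInf_mem hsne
  have hmin : ∀ l', IsPath E l' entry a → l.length ≤ l'.length := by
    intro l' hl'
    rw [hlen]; exact Nat.sInf_le ⟨l', hl', rfl⟩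
  obtain ⟨l₁, l₂, rfl⟩ := List.append_of_mem (hba l hl)
  have hpb : IsPath E (l₁ ++ [b]) entry b := prefix_path hl rfl
  have hmem := hab _ hpb
  have ha1 : a ∈ l₁ := by
    rcases List.mem_append.1 hmem with h | h
    · exact h
    · simp at h; exact absurd h hne
  obtain ⟨m₁, m₂, rfl⟩ := List.append_of_mem ha1
  have hpa : IsPath E (m₁ ++ [a]) entry a := prefix_path hl
    (show (m₁ ++ a :: m₂) ++ b :: l₂ = m₁ ++ a :: (m₂ ++ b :: l₂) by simp)
  have := hmin _ hpa
  simp only [List.length_append, List.length_cons, List.length_nil] at this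
  omega

lemma dom_total (hreach : ∀ v, ∃ l, IsPath E l entry v) {n' a b : V}
    (ha : Dom E entry a n') (hb : Dom E entry b n') :
    Dom E entry a b ∨ Dom E entry b a := by
  by_contra h
  push_neg at h
  obtain ⟨hnab, hnba⟩ := h
  obtain ⟨p, hp, hap⟩ : ∃ p, IsPath E p entry b ∧ a ∉ p := by
    simp only [Dom, not_forall] at hnab; obtain ⟨p, hp, h⟩ := hnab; exact ⟨p, hp, h⟩
  obtain ⟨q, hq, hbq⟩ : ∃ q, IsPath E q entry a ∧ b ∉ q := by
    simp only [Dom, not_forall] at hnba; obtain ⟨q, hq, h⟩ := hnba; exact ⟨q, hq, h⟩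
  obtain ⟨l, hl⟩ := hreach n'
  obtain ⟨l₁, l₂, hleq, hal₂⟩ := split_last (ha l hl)
  by_cases hbl₂ : b ∈ l₂
  · -- build path to n' avoiding a
    obtain ⟨m₁, m₂, hm⟩ := List.append_of_mem hbl₂
    have hsplit : l = (l₁ ++ a :: m₁) ++ b :: m₂ := by simp [hleq, hm]
    have hpath := splice_path hl hsplit hp
    have : a ∈ p ++ m₂ := ha _ hpath
    rcases List.mem_append.1 this with h | h
    · exact hap h
    · exact hal₂ (by rw [hm]; exact List.mem_append.2 (Or.inr (List.mem_cons_of_mem _ h)))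
  · -- build path to n' avoiding b
    have hpath := splice_path hl hleq hq
    have : b ∈ q ++ l₂ := hb _ hpath
    rcases List.mem_append.1 this with h | h
    · exact hbq h
    · exact hbl₂ h

lemma exists_greatest {α : Type*} (r : α → α → Prop) (htrans : ∀ {a b c}, r a b → r b c → r a c)
    (hrefl : ∀ a, r a a) (s : Finset α) : s.Nonempty → (∀ a ∈ s, ∀ b ∈ s, r a b ∨ r b a) →
      ∃ d ∈ s, ∀ d' ∈ s, r d' d := by
  classical
  induction s using Finset.induction_on with
  | empty => intro h; simp at h
  | insert x t hx ih =>
    intro _ htot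
    rcases t.eq_empty_or_nonempty with rfl | htne
    · exact ⟨x, by simp, by intro d' hd'; simp at hd'; subst hd'; exact hrefl _⟩
    · obtain ⟨d, hd, hmax⟩ := ih htne (fun a ha b hb =>
        htot a (Finset.mem_insert_of_mem ha) b (Finset.mem_insert_of_mem hb))
      rcases htot d (Finset.mem_insert_of_mem hd) x (Finset.mem_insert_self x t) with h | h
      · refine ⟨x, Finset.mem_insert_self x t, ?_⟩
        intro d' hd'
        rcases Finset.mem_insert.1 hd' with rfl | hd'
        · exact hrefl d'
        · exact htrans (hmax d' hd') h
      · refine ⟨d, Finset.mem_insert_of_mem hd, ?_⟩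
        intro d' hd'
        rcases Finset.mem_insert.1 hd' with rfl | hd'
        · exact h
        · exact hmax d' hd'

end aux

/-- In a rooted directed graph in which every node is reachable from the entry,
dominance is a partial order, the dominators of any node are totally ordered by
dominance, and every node other than the entry has a unique immediate
dominator. -/
theorem stmt4 {V : Type*} [Finite V] (E : V → V → Prop) (entry : V)
    (hreach : ∀ v, ∃ l, IsPath E l entry v) :
    (∀ n, Dom E entry n n) ∧
    (∀ a b, Dom E entry a b → Dom E entry b a → a = b) ∧
    (∀ a b c, Dom E entry a b → Dom E entry b c → Dom E entry a c) ∧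
    (∀ n' a b, Dom E entry a n' → Dom E entry b n' →
      Dom E entry a b ∨ Dom E entry b a) ∧
    (∀ n, n ≠ entry → ∃! d, (Dom E entry d n ∧ d ≠ n) ∧
      ∀ d', (Dom E entry d' n ∧ d' ≠ n) → Dom E entry d' d) := by
  classical
  have := Fintype.ofFinite V
  refine ⟨fun n => dom_refl n, fun a b => dom_antisymm hreach,
    fun a b c => dom_trans, fun n' a b => dom_total hreach, ?_⟩
  intro n hn
  set S : Finset V := Finset.univ.filter (fun d => Dom E entry d n ∧ d ≠ n) with hS
  have hSne : S.Nonempty := ⟨entry, by simp [hS, dom_entry, Ne.symm hn]⟩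
  have htot : ∀ a ∈ S, ∀ b ∈ S, Dom E entry a b ∨ Dom E entry b a := by
    intro a ha b hb
    simp only [hS, Finset.mem_filter] at ha hb
    exact dom_total hreach ha.2.1 hb.2.1
  obtain ⟨d, hd, hmax⟩ := exists_greatest (Dom E entry) (fun h1 h2 => dom_trans h1 h2)
    dom_refl S hSne htot
  simp only [hS, Finset.mem_filter] at hd
  refine ⟨d, ⟨hd.2, ?_⟩, ?_⟩
  · intro d' hd'
    exact hmax d' (by simp [hS, hd'])
  · rintro y ⟨hy, hymax⟩
    exact dom_antisymm hreach (hmax y (by simp [hS, hy])) (hymax d hd.2)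
end

section
/- (Sparse ≡ dense) Consider a program in SSI form for a monotone PLV constraint system E_dense over a finite-height lattice L, with constraints [v]^p = [v]^p ∧ F_v^{s,p}([v_1]^s,…,[v_n]^s) for each variable v, program point p and predecessor s. Let (Y_v) be the maximum solution of the derived sparse constraint system (one constraint [v] ⊑ G_v^i([a],…,[b]) per definition point i of v, where G_v^i is the projection of F_v^{s,p} guaranteed by the LINK property). Then the assignment X_v^p = Y_v for p ∈ live(v) and X_v^p = ⊥ for p ∉ live(v) is the maximum solution of E_dense. -/
open scoped Classical in
/-- Sparse ≡ dense: for a program in SSI form for a monotone PLV constraint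
system (constraints `[v]^p ⊑ F v s p (x^s)` for every predecessor `s` of `p`),
with the SSI properties encoded as hypotheses — INFO (`F` is constantly `⊥`
outside the live range), SPLIT-DEF (`F` is the trivial projection at non-def
edges inside live ranges), boundary defs, and VERSION/SSA (each live range has
a single definition point from which it is reachable through live-range
edges) — if `Y` is the maximum solution of the derived sparse system (one
constraint per definition edge of each variable), then `X v p := Y v` for
`p ∈ live v` and `⊥` otherwise is the maximum solution of the dense system. -/
theorem stmt9 {L P ι : Type*} [Lattice L] [BoundedOrder L]
    (preds : P → Set P) (live : ι → Set P)
    (F : ι → P → P → (ι → L) → L)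
    (D : ι → Set (P × P))
    (hmono : ∀ v s p, Monotone (F v s p))
    (hne : ∀ p : P, (preds p).Nonempty)
    (hinfo : ∀ v p, p ∉ live v → ∀ s ∈ preds p, F v s p = fun _ => ⊥)
    (hsplit : ∀ v s p, s ∈ preds p → p ∈ live v → (s, p) ∉ D v →
      F v s p = fun x => x v)
    (hD : ∀ v s p, (s, p) ∈ D v → s ∈ preds p ∧ p ∈ live v)
    (hbound : ∀ v s p, s ∈ preds p → p ∈ live v → s ∉ live v → (s, p) ∈ D v)
    (hroot : ∀ v, ∃ pv, (∀ s p, (s, p) ∈ D v → p = pv) ∧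
      ∀ p ∈ live v, Relation.ReflTransGen
        (fun a b => a ∈ preds b ∧ a ∈ live v ∧ b ∈ live v) pv p)
    (Y : ι → L)
    (hYsol : ∀ v s p, (s, p) ∈ D v →
      Y v ≤ F v s p fun u => if s ∈ live u then Y u else ⊥)
    (hYmax : ∀ Z : ι → L,
      (∀ v s p, (s, p) ∈ D v →
        Z v ≤ F v s p fun u => if s ∈ live u then Z u else ⊥) →
      ∀ v, Z v ≤ Y v) :
    (∀ p v, ∀ s ∈ preds p,
      (if p ∈ live v then Y v else ⊥) ≤
        F v s p fun u => if s ∈ live u then Y u else ⊥) ∧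
    ∀ X : P → ι → L, (∀ p v, ∀ s ∈ preds p, X p v ≤ F v s p (X s)) →
      ∀ p v, X p v ≤ if p ∈ live v then Y v else ⊥ := by
  constructor
  · intro p v s hs
    by_cases hp : p ∈ live v
    · simp only [if_pos hp]
      by_cases hd : (s, p) ∈ D v
      · exact hYsol v s p hd
      · have hsl : s ∈ live v := by
          by_contra hsl
          exact hd (hbound v s p hs hp hsl)
        rw [hsplit v s p hs hp hd]
        simp [hsl]
    · simp [hp]
  · intro X hX
    choose pv hpv1 hpv2 using hroot
    have hbot : ∀ p u, p ∉ live u → X p u ≤ ⊥ := by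
      intro p u hpu
      obtain ⟨s, hs⟩ := hne p
      have := hX p u s hs
      rwa [hinfo u p hpu s hs] at this
    have hchain : ∀ v p, Relation.ReflTransGen
        (fun a b => a ∈ preds b ∧ a ∈ live v ∧ b ∈ live v) (pv v) p →
        X p v ≤ X (pv v) v := by
      intro v p h
      induction h with
      | refl => exact le_rfl
      | tail hab hedge ih =>
        rename_i b c
        obtain ⟨hpred, hbl, hcl⟩ := hedge
        by_cases hd : (b, c) ∈ D v
        · rw [hpv1 v b c hd]
        · have h1 := hX c v b hpred
          rw [hsplit v b c hpred hcl hd] at h1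
          exact h1.trans ih
    set Z : ι → L := fun u => X (pv u) u with hZ
    have hZY : ∀ u, Z u ≤ Y u := by
      apply hYmax
      intro v s p hd
      obtain ⟨hs, hp⟩ := hD v s p hd
      have hppv : p = pv v := hpv1 v s p hd
      have h1 : X p v ≤ F v s p (X s) := hX p v s hs
      have h2 : F v s p (X s) ≤ F v s p fun u => if s ∈ live u then Z u else ⊥ := by
        apply hmono
        intro u
        by_cases hsu : s ∈ live u
        · simp only [if_pos hsu]
          exact hchain u s (hpv2 u s hsu)
        · simp only [if_neg hsu]
          exact hbot s u hsu
      calc Z v = X p v := by rw [hZ]; simp [hppv]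
        _ ≤ _ := h1.trans h2
    intro p v
    by_cases hp : p ∈ live v
    · simp only [if_pos hp]
      exact (hchain v p (hpv2 v p hp)).trans (hZY v)
    · simp only [if_neg hp]
      exact hbot p v hp
end

section
/- (φ-placement at DF⁺ suffices for SPLIT-MEET) Let P be a set of CFG nodes containing all definition points of variable v (including a pseudo-definition at the entry). If a fresh definition of v (a φ-function) is inserted at every node of the iterated dominance frontier DF⁺(P), then for every node q and every path from the entry to q, the last definition of v encountered on the path is the same for all paths; i.e., exactly one definition of v reaches each program point. -/
/-- The dominance frontier of a node. -/
def DF {V : Type*} (E : V → V → Prop) (entry n : V) : Set V :=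
  {n' | (∃ q, E q n' ∧ Dom E entry n q) ∧ ¬(Dom E entry n n' ∧ n ≠ n')}

/-- The iterated dominance frontier `DF⁺(P)` of a set of nodes. -/
def DFplusSet {V : Type*} (E : V → V → Prop) (entry : V) (P : Set V) : Set V :=
  ⋂₀ {S | (⋃ n ∈ P, DF E entry n) ⊆ S ∧ ∀ z ∈ S, DF E entry z ⊆ S}

section Aux

variable {V : Type*} {E : V → V → Prop} {entry : V}

/-- A prefix of a path (cut just after an occurrence of `x`) is a path to `x`. -/
lemma isPath_prefix {u w : List V} {x a b : V}
    (h : IsPath E (u ++ x :: w) a b) : IsPath E (u ++ [x]) a x := by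
  obtain ⟨h1, _h2, h3⟩ := h
  refine ⟨?_, ?_, ?_⟩
  · cases u with
    | nil => simpa using h1
    | cons c cs => simpa using h1
  · simp
  · refine h3.prefix ?_
    refine ⟨w, by simp⟩

/-- A suffix of a path (starting at an occurrence of `x`) is a path from `x`. -/
lemma isPath_suffix {u w : List V} {x a b : V}
    (h : IsPath E (u ++ x :: w) a b) : IsPath E (x :: w) x b := by
  obtain ⟨_h1, h2, h3⟩ := h
  refine ⟨rfl, ?_, h3.suffix ⟨u, rfl⟩⟩
  rw [List.getLast?_append] at h2
  have : (x :: w).getLast? ≠ none := by simp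
  cases hg : (x :: w).getLast? with
  | none => exact absurd hg this
  | some c => rw [hg] at h2; simpa using h2

/-- Concatenating a path `a → x` with a path `x → b` gives a path `a → b`. -/
lemma isPath_append {m t : List V} {a x b : V}
    (hm : IsPath E m a x) (ht : IsPath E (x :: t) x b) : IsPath E (m ++ t) a b := by
  obtain ⟨hm1, hm2, hm3⟩ := hm
  obtain ⟨_, ht2, ht3⟩ := ht
  have hmne : m ≠ [] := by intro h; subst h; simp at hm1
  refine ⟨?_, ?_, ?_⟩
  · rw [List.head?_append]
    cases hh : m.head? with
    | none => exact absurd (List.head?_eq_none_iff.mp hh) hmne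
    | some c => rw [hh] at hm1; simpa using hm1
  · rw [List.getLast?_append]
    cases t with
    | nil =>
      have hxb : x = b := by simpa using ht2
      rw [← hxb]; simpa using hm2
    | cons c cs =>
      have : (c :: cs).getLast? = some b := by
        rw [show ((x :: c :: cs).getLast? = (c :: cs).getLast?) from rfl] at ht2
        exact ht2
      simp [this]
  · rw [List.Chain', List.isChain_append]
    refine ⟨hm3, ht3.tail, ?_⟩
    intro p hp y hy
    rw [hm2] at hp
    cases hp
    rcases t with _ | ⟨c, cs⟩
    · simp at hy
    · simp at hy
      subst hy
      exact (List.chain_cons.mp (ht3 : List.Chain E x (c :: cs))).1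

/-- First occurrence decomposition. -/
lemma exists_first_occ {a : V} {l : List V} (h : a ∈ l) :
    ∃ s t, l = s ++ a :: t ∧ a ∉ s := by
  induction l with
  | nil => cases h
  | cons c cs ih =>
    by_cases hc : a = c
    · exact ⟨[], cs, by simp [hc], by simp⟩
    · have hmem : a ∈ cs := by
        rcases List.mem_cons.mp h with h' | h'
        · exact absurd h' hc
        · exact h'
      obtain ⟨s, t, rfl, hns⟩ := ih hmem
      exact ⟨c :: s, t, rfl, by simp [hns, hc]⟩

/-- Last filtered-element decomposition. -/
lemma last_filter_decomp (p : V → Bool) (l : List V) (h : l.filter p ≠ []) :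
    ∃ s d t, l = s ++ d :: t ∧ p d = true ∧ (∀ x ∈ t, p x = false) ∧
      (l.filter p).getLast? = some d := by
  induction l using List.reverseRecOn with
  | nil => simp at h
  | append_singleton l a ih =>
    by_cases hp : p a = true
    · refine ⟨l, a, [], rfl, hp, by simp, ?_⟩
      rw [List.filter_append, List.getLast?_append]
      simp [hp]
    · have hf : (l ++ [a]).filter p = l.filter p := by
        rw [List.filter_append]
        simp [hp]
      rw [hf] at h ⊢
      obtain ⟨s, d, t, rfl, hd, ht, hlast⟩ := ih h
      refine ⟨s, d, t ++ [a], by simp, hd, ?_, hlast⟩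
      intro x hx
      rcases List.mem_append.mp hx with hx | hx
      · exact ht x hx
      · simp at hx; subst hx
        exact Bool.eq_false_iff.mpr hp

/-- `DF` of any node of `P ∪ DF⁺(P)` is contained in `DF⁺(P)`. -/
lemma df_subset_dfplus {P : Set V} {d : V} (hd : d ∈ P ∪ DFplusSet E entry P) :
    DF E entry d ⊆ DFplusSet E entry P := by
  intro y hy
  rw [DFplusSet, Set.mem_sInter]
  intro S hS
  obtain ⟨hS1, hS2⟩ := hS
  rcases hd with hP | hDF
  · exact hS1 (Set.mem_biUnion hP hy)
  · have : d ∈ S := by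
      rw [DFplusSet, Set.mem_sInter] at hDF
      exact hDF S ⟨hS1, hS2⟩
    exact hS2 d this hy

/-- One step along a chain: dominance propagates as long as we stay outside
`P ∪ DF⁺(P)`. -/
lemma dom_step {P : Set V} {d x y : V} (hd : d ∈ P ∪ DFplusSet E entry P)
    (hx : Dom E entry d x) (hE : E x y) (hy : y ∉ P ∪ DFplusSet E entry P) :
    Dom E entry d y := by
  by_contra hnd
  have hdf : y ∈ DF E entry d := ⟨⟨x, hE, hx⟩, fun h => hnd h.1⟩
  exact hy (Or.inr (df_subset_dfplus hd hdf))

/-- `d` dominates itself (every path to `d` ends in `d`). -/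
lemma dom_self (E : V → V → Prop) (entry d : V) : Dom E entry d d := by
  intro l hl
  exact List.mem_of_mem_getLast? (by rw [hl.2.1]; simp)

/-- Dominance propagates to the end of a chain avoiding `P ∪ DF⁺(P)`. -/
lemma dom_along {P : Set V} {d : V} (hd : d ∈ P ∪ DFplusSet E entry P) :
    ∀ (t : List V) (x : V), List.Chain E x t → Dom E entry d x →
      (∀ y ∈ t, y ∉ P ∪ DFplusSet E entry P) →
      ∀ y, (x :: t).getLast? = some y → Dom E entry d y := by
  intro t
  induction t with
  | nil =>
    intro x _ hx _ y hy
    simp at hy; subst hy; exact hx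
  | cons z zs ih =>
    intro x hc hx hav y hy
    obtain ⟨hxz, hzc⟩ := List.chain_cons.mp hc
    have hz : Dom E entry d z :=
      dom_step hd hx hxz (hav z (by simp))
    exact ih z hzc hz (fun w hw => hav w (by simp [hw])) y hy

end Aux

open scoped Classical in
/-- φ-placement at `DF⁺` suffices for SPLIT-MEET: if `P` contains all
definition points of `v` (including a pseudo-definition at the entry) and a
fresh definition is inserted at every node of `DF⁺(P)`, then for every node `q`
the last definition of `v` encountered along a path from the entry to `q` is
the same for all such paths — i.e. exactly one definition reaches each program
point. -/
theorem stmt12 {V : Type*} (E : V → V → Prop) (entry : V)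
    (P : Set V) (hentry : entry ∈ P)
    (q : V) (l1 l2 : List V)
    (h1 : IsPath E l1 entry q) (h2 : IsPath E l2 entry q) :
    (l1.filter fun x => decide (x ∈ P ∪ DFplusSet E entry P)).getLast? =
      (l2.filter fun x => decide (x ∈ P ∪ DFplusSet E entry P)).getLast? := by
  set D : Set V := P ∪ DFplusSet E entry P with hD
  set p : V → Bool := fun x => decide (x ∈ D) with hp
  have hentryD : entry ∈ D := Or.inl hentry
  -- the filtered lists are nonempty
  have hne : ∀ (l : List V), IsPath E l entry q → l.filter p ≠ [] := by
    intro l hl hnil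
    have hmem : entry ∈ l := List.mem_of_mem_head? (by rw [hl.1]; simp)
    have := List.filter_eq_nil_iff.mp hnil entry hmem
    simp [hp] at this
    exact this hentryD
  -- decompose both paths at the last filtered element
  obtain ⟨s1, d1, t1, hl1, hd1, ht1, hlast1⟩ := last_filter_decomp p l1 (hne l1 h1)
  obtain ⟨s2, d2, t2, hl2, hd2, ht2, hlast2⟩ := last_filter_decomp p l2 (hne l2 h2)
  have hd1D : d1 ∈ D := by simpa [hp] using hd1
  have hd2D : d2 ∈ D := by simpa [hp] using hd2
  have ht1D : ∀ x ∈ t1, x ∉ D := by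
    intro x hx
    have := ht1 x hx
    simpa [hp] using this
  have ht2D : ∀ x ∈ t2, x ∉ D := by
    intro x hx
    have := ht2 x hx
    simpa [hp] using this
  -- suffix paths from d1, d2 to q
  have hsuf1 : IsPath E (d1 :: t1) d1 q := isPath_suffix (hl1 ▸ h1)
  have hsuf2 : IsPath E (d2 :: t2) d2 q := isPath_suffix (hl2 ▸ h2)
  -- d1 and d2 dominate q
  have hdom1 : Dom E entry d1 q :=
    dom_along hd1D t1 d1 hsuf1.2.2 (dom_self E entry d1) ht1D q hsuf1.2.1
  have hdom2 : Dom E entry d2 q :=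
    dom_along hd2D t2 d2 hsuf2.2.2 (dom_self E entry d2) ht2D q hsuf2.2.1
  -- it suffices to show d1 = d2
  suffices hdd : d1 = d2 by rw [hlast1, hlast2, hdd]
  by_contra hne12
  -- mutual dominance of d1 and d2
  have hdomd : ∀ (da db : V) (ta : List V), da ≠ db → db ∈ D →
      IsPath E (da :: ta) da q → (∀ x ∈ ta, x ∉ D) → Dom E entry db q →
      Dom E entry db da := by
    intro da db ta hab hbD hpa htaD hbq
    by_contra hnd
    rw [Dom] at hnd
    push_neg at hnd
    obtain ⟨m, hm, hbm⟩ := hnd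
    have hpath : IsPath E (m ++ ta) entry q := isPath_append hm hpa
    have : db ∈ m ++ ta := hbq _ hpath
    rcases List.mem_append.mp this with h | h
    · exact hbm h
    · exact htaD db h hbD
  have h21 : Dom E entry d2 d1 := hdomd d1 d2 t1 hne12 hd2D hsuf1 ht1D hdom2
  have h12 : Dom E entry d1 d2 := hdomd d2 d1 t2 (Ne.symm hne12) hd1D hsuf2 ht2D hdom1
  -- derive a contradiction from mutual dominance of distinct nodes
  -- d2 ∈ l2; take the first occurrence of d2 in l2
  have hd2mem : d2 ∈ l2 := by rw [hl2]; simp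
  obtain ⟨u2, w2, hu2, hd2nu2⟩ := exists_first_occ hd2mem
  have hpath2 : IsPath E (u2 ++ [d2]) entry d2 := isPath_prefix (hu2 ▸ h2)
  have hd1u2 : d1 ∈ u2 := by
    have := h12 _ hpath2
    rcases List.mem_append.mp this with h | h
    · exact h
    · simp at h; exact absurd h hne12
  obtain ⟨u3, w3, hu3, _⟩ := exists_first_occ hd1u2
  have hpath3 : IsPath E (u3 ++ [d1]) entry d1 := by
    have : l2 = u3 ++ d1 :: (w3 ++ d2 :: w2) := by rw [hu2, hu3]; simp
    exact isPath_prefix (this ▸ h2)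
  have : d2 ∈ u3 ++ [d1] := h21 _ hpath3
  rcases List.mem_append.mp this with h | h
  · exact hd2nu2 (by rw [hu3]; simp [h])
  · simp at h; exact hne12 h.symm
end

section
/- (Equivalence SSI/SEG for partitioned variable problems) Let G be a CFG, v a variable, and SEG the forward sparse evaluation graph of Choi et al. for v, with node set built from the entry node, all nodes with non-identity transfer functions (call this set P), and the iterated dominance frontier DF⁺(P), with edges given by immediate dominance among these nodes. Then applying the live range splitting strategy P↓ to the program augmented with a pseudo-definition of v at the entry, a pseudo-use at the exit, and a pseudo-use at each definition of v, yields a program representation whose SSA definitions, live ranges, and def-use chains are respectively in bijection with the nodes of SEG, the mapping function M of SEG, and the edges of SEG. -/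
/-- The SSA definition placed at `q ∈ S` reaches the exit of node `u`: there is
a path from `q` to `u` crossing no other definition site of `S`. -/
def ReachDef {V : Type*} (E : V → V → Prop) (S : Set V) (q u : V) : Prop :=
  q ∈ S ∧ ∃ l, IsPath E l q u ∧ ∀ x ∈ l.drop 1, x ∉ S

/-- `q` is the nearest dominator of `u` among the nodes of `S`. -/
def NearestSDom {V : Type*} (E : V → V → Prop) (entry : V) (S : Set V)
    (q u : V) : Prop :=
  q ∈ S ∧ Dom E entry q u ∧ ∀ r ∈ S, Dom E entry r u → Dom E entry r q

namespace Stmt15Aux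

variable {V : Type*} {E : V → V → Prop} {entry : V}

lemma isPath_ne_nil {l : List V} {a b : V} (h : IsPath E l a b) : l ≠ [] := by
  rintro rfl; simp [IsPath] at h

lemma isPath_singleton (E : V → V → Prop) (a : V) : IsPath E [a] a a :=
  ⟨rfl, rfl, List.isChain_singleton a⟩

lemma dom_self (E : V → V → Prop) (entry q : V) : Dom E entry q q :=
  fun _ hl => List.mem_of_mem_getLast? hl.2.1

lemma dom_entry (E : V → V → Prop) (entry u : V) : Dom E entry entry u :=
  fun _ hl => List.mem_of_mem_head? hl.1

lemma dom_entry_eq {q : V} (h : Dom E entry q entry) : q = entry := by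
  have := h [entry] (isPath_singleton E entry); simpa using this

/-- Decomposition at the first element violating `p`. -/
lemma decomp (p : V → Bool) {l : List V} (h : ¬ ∀ x ∈ l, p x = true) :
    ∃ x t, p x = false ∧ l = l.takeWhile p ++ x :: t := by
  have hd : l.dropWhile p ≠ [] := by
    rw [Ne, List.dropWhile_eq_nil_iff]; exact h
  refine ⟨(l.dropWhile p).head hd, (l.dropWhile p).tail,
    List.head_dropWhile_not p hd, ?_⟩
  conv_lhs => rw [← List.takeWhile_append_dropWhile (p := p) (l := l)]
  rw [List.cons_head_tail]

/-- Path to the first occurrence of `c`. -/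
lemma firstPath {l : List V} {a b c : V} (hl : IsPath E l a b) (hc : c ∈ l) :
    ∃ m, IsPath E m a c ∧ (∀ y ∈ m.dropLast, y ≠ c) ∧
      (∀ y ∈ m.dropLast, y ∈ l.dropLast) := by
  classical
  set p : V → Bool := fun x => decide (x ≠ c) with hp
  have hnot : ¬ ∀ x ∈ l, p x = true := by
    intro hall; have := hall c hc; simp [hp] at this
  obtain ⟨x, t, hx, hdec⟩ := decomp p hnot
  have hxc : x = c := by simpa [hp] using hx
  subst hxc
  set tw := l.takeWhile p with htw
  refine ⟨tw ++ [x], ⟨?_, List.getLast?_concat, ?_⟩, ?_, ?_⟩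
  · -- head?
    have h1 : l.head? = (tw ++ [x]).head?.or t.head? := by
      conv_lhs => rw [hdec]
      rw [show tw ++ x :: t = (tw ++ [x]) ++ t by simp, List.head?_append]
    have hne : tw ++ [x] ≠ [] := by simp
    rw [List.head?_eq_head hne] at h1 ⊢
    rw [hl.1] at h1
    simpa using h1.symm
  · -- chain'
    exact hl.2.2.prefix ⟨t, by rw [hdec]; simp⟩
  · intro y hy
    rw [List.dropLast_concat] at hy
    have := List.mem_takeWhile_imp hy
    simpa [hp] using this
  · intro y hy
    rw [List.dropLast_concat] at hy
    rw [hdec, show tw ++ x :: t = tw ++ ((x :: t) : List V) from rfl,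
      List.dropLast_append_of_ne_nil (by simp)]
    exact List.mem_append_left _ hy

/-- Antisymmetry of dominance for reachable nodes. -/
lemma dom_antisymm (hreach : ∀ v, ∃ l, IsPath E l entry v) {q x : V}
    (h1 : Dom E entry q x) (h2 : Dom E entry x q) : q = x := by
  by_contra hne
  obtain ⟨l, hl⟩ := hreach x
  have hxl : x ∈ l := List.mem_of_mem_getLast? hl.2.1
  obtain ⟨m₁, hm₁, hm₁ne, -⟩ := firstPath hl hxl
  have hq₁ : q ∈ m₁ := h1 m₁ hm₁
  have hm₁nn : m₁ ≠ [] := isPath_ne_nil hm₁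
  have hq₁' : q ∈ m₁.dropLast := by
    have := (List.dropLast_append_getLast hm₁nn) ▸ hq₁
    rcases List.mem_append.mp this with h | h
    · exact h
    · exfalso
      have hlast : m₁.getLast hm₁nn = x := by
        have := hm₁.2.1
        rw [List.getLast?_eq_getLast hm₁nn] at this
        exact Option.some_injective _ this
      simp at h
      exact hne (h.trans hlast)
  obtain ⟨m₂, hm₂, hm₂ne, hm₂sub⟩ := firstPath hm₁ (List.dropLast_subset _ hq₁')
  have hx₂ : x ∈ m₂ := h2 m₂ hm₂
  have hm₂nn : m₂ ≠ [] := isPath_ne_nil hm₂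
  have := (List.dropLast_append_getLast hm₂nn) ▸ hx₂
  rcases List.mem_append.mp this with h | h
  · exact hm₁ne x (hm₂sub x h) rfl
  · have hlast : m₂.getLast hm₂nn = q := by
      have := hm₂.2.1
      rw [List.getLast?_eq_getLast hm₂nn] at this
      exact Option.some_injective _ this
    simp at h
    exact hne (h.trans hlast).symm

/-- Path suffix starting from the last element of `l` lying in `S`. -/
lemma lastPath (S : Set V) {l : List V} {a b : V} (hl : IsPath E l a b)
    (hx : ∃ c ∈ l, c ∈ S) :
    ∃ x m, x ∈ S ∧ IsPath E m x b ∧ ∀ y ∈ m.drop 1, y ∉ S := by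
  classical
  set p : V → Bool := fun y => decide (y ∉ S) with hp
  obtain ⟨c, hcl, hcS⟩ := hx
  have hnot : ¬ ∀ y ∈ l.reverse, p y = true := by
    intro hall
    have := hall c (by simpa using hcl)
    simp [hp, hcS] at this
  obtain ⟨x, t, hxp, hdec⟩ := decomp p hnot
  have hxS : x ∈ S := by simpa [hp] using hxp
  set tw := l.reverse.takeWhile p with htw
  have hleq : l = t.reverse ++ (x :: tw.reverse) := by
    rw [← List.reverse_reverse l, hdec]
    simp
  refine ⟨x, x :: tw.reverse, hxS, ⟨rfl, ?_, ?_⟩, ?_⟩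
  · -- getLast?
    have h1 : l.getLast? = (x :: tw.reverse).getLast?.or t.reverse.getLast? := by
      conv_lhs => rw [hleq]; rw [List.getLast?_append]
    have hne : (x :: tw.reverse : List V) ≠ [] := by simp
    rw [List.getLast?_eq_getLast hne] at h1 ⊢
    rw [hl.2.1] at h1
    simpa using h1.symm
  · exact hl.2.2.suffix ⟨t.reverse, hleq.symm⟩
  · intro y hy
    simp only [List.drop_one, List.tail_cons] at hy
    have : y ∈ tw := by simpa using hy
    have := List.mem_takeWhile_imp this
    simpa [hp] using this

/-- Concatenation of paths. -/
lemma isPath_trans {l m : List V} {a b c : V} (h1 : IsPath E l a b)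
    (h2 : IsPath E m b c) : IsPath E (l ++ m.drop 1) a c := by
  obtain ⟨m', rfl⟩ : ∃ m', m = b :: m' := by
    cases m with
    | nil => simp [IsPath] at h2
    | cons y t => exact ⟨t, by have := h2.1; simp at this; rw [this]⟩
  simp only [List.drop_one, List.tail_cons]
  cases m' with
  | nil =>
    have : b = c := by simpa using h2.2.1
    subst this; simpa using h1
  | cons y t =>
    refine ⟨?_, ?_, ?_⟩
    · rw [List.head?_append, h1.1]; rfl
    · rw [List.getLast?_append]
      have := h2.2.1
      rw [List.getLast?_cons_cons] at this
      rw [this]; rfl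
    · refine List.IsChain.append h1.2.2 h2.2.2.tail ?_
      intro p hp q hq
      have hpb : p = b := by
        rw [h1.2.1] at hp; simp at hp; exact hp.symm
      have hqy : q = y := by simp at hq; exact hq.symm
      have := (List.isChain_cons_cons.mp h2.2.2).1
      rw [hpb, hqy]; exact this

variable {P : Set V}

/-- `S = P ∪ DF⁺(P)` is closed under dominance frontiers. -/
lemma df_subset_plus {q : V} (hq : q ∈ P ∪ DFplusSet E entry P) :
    DF E entry q ⊆ DFplusSet E entry P := by
  rcases hq with hq | hq
  · intro y hy T hT
    exact hT.1 (Set.mem_biUnion hq hy)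
  · intro y hy T hT
    exact hT.2 q (hq T hT) hy

lemma df_closed {q : V} (hq : q ∈ P ∪ DFplusSet E entry P) :
    DF E entry q ⊆ P ∪ DFplusSet E entry P :=
  (df_subset_plus hq).trans Set.subset_union_right

/-- Inner induction for Claim A. -/
lemma chain_dom {S : Set V} (hS : ∀ r ∈ S, DF E entry r ⊆ S) {q : V}
    (hqS : q ∈ S) (t : List V) :
    (q :: t).Chain' E → (∀ x ∈ t, x ∉ S) →
      Dom E entry q ((q :: t).getLast (by simp)) := by
  induction t using List.reverseRecOn with
  | nil => intro _ _; simpa using dom_self E entry q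
  | append_singleton t y ih =>
    intro hch hfree
    have hch' : ((q :: t) ++ [y]).Chain' E := by simpa using hch
    simp only [List.Chain', List.isChain_append] at hch'
    obtain ⟨h1, -, h3⟩ := hch'
    have hedge : E ((q :: t).getLast (by simp)) y :=
      h3 _ (List.getLast?_eq_getLast (by simp)) y rfl
    have hdomz : Dom E entry q ((q :: t).getLast (by simp)) :=
      ih h1 (fun x hx => hfree x (by simp [hx]))
    have hygoal : (q :: (t ++ [y])).getLast (by simp) = y := by
      have e1 : (q :: (t ++ [y])).getLast? = some y := by
        rw [show q :: (t ++ [y]) = (q :: t) ++ [y] by simp, List.getLast?_concat]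
      rw [List.getLast?_eq_getLast (by simp)] at e1
      exact Option.some_injective _ e1
    rw [hygoal]
    by_contra hnd
    have hyDF : y ∈ DF E entry q := ⟨⟨_, hedge, hdomz⟩, fun hc => hnd hc.1⟩
    exact hfree y (by simp) (hS q hqS hyDF)

/-- Claim A: the definition at `q` dominates every node its `S`-free paths reach. -/
lemma reachdef_dom {S : Set V} (hS : ∀ r ∈ S, DF E entry r ⊆ S) {q u : V}
    (h : ReachDef E S q u) : Dom E entry q u := by
  obtain ⟨hqS, l, hl, hfree⟩ := h
  obtain ⟨t, rfl⟩ : ∃ t, l = q :: t := by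
    cases l with
    | nil => simp [IsPath] at hl
    | cons y t => exact ⟨t, by have := hl.1; simp at this; rw [this]⟩
  have hfree' : ∀ x ∈ t, x ∉ S := fun x hx => hfree x (by simpa using hx)
  have hu : (q :: t).getLast (by simp) = u := by
    have := hl.2.1
    rw [List.getLast?_eq_getLast (by simp)] at this
    exact Option.some_injective _ this
  rw [← hu]
  exact chain_dom hS hqS t hl.2.2 hfree'

section Main

variable {S : Set V}

/-- Forward direction of (2). -/
lemma reachdef_nearest (hSc : ∀ r ∈ S, DF E entry r ⊆ S) {q u : V}
    (h : ReachDef E S q u) : NearestSDom E entry S q u := by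
  refine ⟨h.1, reachdef_dom hSc h, ?_⟩
  intro r hrS hru m hm
  obtain ⟨-, l, hl, hfree⟩ := h
  have hpath := isPath_trans hm hl
  have hrmem := hru _ hpath
  rcases List.mem_append.mp hrmem with h | h
  · exact h
  · exact absurd hrS (hfree r h)

/-- Existence of a reaching definition. -/
lemma exists_reachdef (hreach : ∀ v, ∃ l, IsPath E l entry v) (hES : entry ∈ S) (u : V) : ∃ q, ReachDef E S q u := by
  obtain ⟨l, hl⟩ := hreach u
  obtain ⟨x, m, hxS, hm, hfree⟩ :=
    lastPath S hl ⟨entry, List.mem_of_mem_head? hl.1, hES⟩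
  exact ⟨x, hxS, m, hm, hfree⟩

/-- Uniqueness of nearest `S`-dominators. -/
lemma nearest_unique (hreach : ∀ v, ∃ l, IsPath E l entry v) {q q' u : V} (h : NearestSDom E entry S q u)
    (h' : NearestSDom E entry S q' u) : q = q' :=
  dom_antisymm hreach (h'.2.2 q h.1 h.2.1) (h.2.2 q' h'.1 h'.2.1)

/-- Backward direction of (2). -/
lemma nearest_reachdef (hreach : ∀ v, ∃ l, IsPath E l entry v)
    (hSc : ∀ r ∈ S, DF E entry r ⊆ S) (hES : entry ∈ S)
    {q u : V} (h : NearestSDom E entry S q u) : ReachDef E S q u := by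
  obtain ⟨x, hx⟩ := exists_reachdef hreach hES u
  have hx' := reachdef_nearest hSc hx
  rwa [nearest_unique hreach h hx']

end Main

section Three

variable {P : Set V}

/-- Core of (3), forward direction. -/
lemma three_fwd (hwDF : w ∉ DFplusSet E entry P) (hE : E u w)
    (hrd : ReachDef E (P ∪ DFplusSet E entry P) q u) :
    q ∈ P ∪ DFplusSet E entry P ∧ q ≠ w ∧ Dom E entry q w ∧
      ∀ r ∈ P ∪ DFplusSet E entry P, Dom E entry r w → r ≠ w →
        Dom E entry r q := by
  have hqS := hrd.1
  have hdomu := reachdef_dom (fun r hr => df_closed hr) hrd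
  have hwq : Dom E entry q w ∧ q ≠ w := by
    by_contra hc
    exact hwDF (df_subset_plus hqS ⟨⟨u, hE, hdomu⟩, hc⟩)
  refine ⟨hqS, hwq.2, hwq.1, ?_⟩
  intro r hrS hrw hrne m hm
  obtain ⟨-, l, hl, hfree⟩ := hrd
  have puw : IsPath E [u, w] u w := ⟨rfl, rfl, List.isChain_pair.mpr hE⟩
  have pw := isPath_trans (isPath_trans hm hl) puw
  have hrmem := hrw _ pw
  rcases List.mem_append.mp hrmem with h | h
  · rcases List.mem_append.mp h with h | h
    · exact h
    · exact absurd hrS (hfree r h)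
  · exact absurd (by simpa using h) hrne

/-- Core of (3), backward direction. -/
lemma three_bwd (hreach : ∀ v, ∃ l, IsPath E l entry v)
    (hwDF : w ∉ DFplusSet E entry P)
    (hqS : q ∈ P ∪ DFplusSet E entry P) (hqw : q ≠ w)
    (hdom : Dom E entry q w)
    (hnear : ∀ r ∈ P ∪ DFplusSet E entry P, Dom E entry r w → r ≠ w →
      Dom E entry r q) (hES : entry ∈ P ∪ DFplusSet E entry P) :
    ∃ u, E u w ∧ ReachDef E (P ∪ DFplusSet E entry P) q u := by
  have hwe : w ≠ entry := by
    rintro rfl; exact hqw (dom_entry_eq hdom)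
  obtain ⟨l, hl⟩ := hreach w
  have hlnn : l ≠ [] := isPath_ne_nil hl
  have hlw : l.getLast hlnn = w := by
    have := hl.2.1
    rw [List.getLast?_eq_getLast hlnn] at this
    exact Option.some_injective _ this
  have hdec : l.dropLast ++ [w] = l := by
    rw [← hlw]; exact List.dropLast_append_getLast hlnn
  have hl'nn : l.dropLast ≠ [] := by
    intro h0
    have h1 : l = [w] := by rw [← hdec, h0]; rfl
    rw [h1] at hl
    have := hl.1
    simp at this
    exact hwe this
  set u := l.dropLast.getLast hl'nn with hu
  have hch2 : (l.dropLast ++ [w]).Chain' E := by rw [hdec]; exact hl.2.2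
  simp only [List.Chain', List.isChain_append] at hch2
  obtain ⟨hch1, -, h3⟩ := hch2
  have hEuw : E u w := h3 u (List.getLast?_eq_getLast hl'nn) w rfl
  have hpl' : IsPath E l.dropLast entry u := by
    refine ⟨?_, List.getLast?_eq_getLast hl'nn, hch1⟩
    have := hl.1
    rw [← hdec, List.head?_append, List.head?_eq_head hl'nn] at this
    rw [List.head?_eq_head hl'nn]
    simpa using this
  obtain ⟨x, hx⟩ := exists_reachdef hreach hES u
  obtain ⟨hxS, hxw, hxdomw, hxnear⟩ := three_fwd hwDF hEuw hx
  have hqx : Dom E entry q x := hxnear q hqS hdom hqw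
  have hxq : Dom E entry x q := hnear x hxS hxdomw hxw
  have : q = x := dom_antisymm hreach hqx hxq
  subst this
  exact ⟨u, hEuw, hx⟩

end Three

end Stmt15Aux


open Stmt15Aux in
/-- Equivalence SSI/SEG for partitioned variable problems.  Let `P` be the set
of nodes with non-identity transfer functions together with the entry (which
carries a pseudo-definition of `v`), `M = DF⁺(P)` the meet nodes of the sparse
evaluation graph, and `S = P ∪ M` the SEG nodes / SSA definition sites produced
by the live range splitting strategy `P↓`.  Then: (1) every node `u` is in the
live range of exactly one SSA version (defined at the unique `q` with
`ReachDef q u`); (2) that version is the nearest `S`-dominator of `u`, matching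
the SEG mapping function `M`; (3) the def-use chain feeding the pseudo-use at a
non-meet node `w ∈ P` comes from the immediate strict `S`-dominator of `w`,
matching the SEG edges `(n_q, n_p)`; and (4) the def-use chains feeding a meet
node `w ∈ M` come from the nearest `S`-dominators of the CFG predecessors of
`w`, matching the SEG edges `(n_q, n_m)`. -/
theorem stmt15 {V : Type*} (E : V → V → Prop) (entry : V)
    (hreach : ∀ v, ∃ l, IsPath E l entry v)
    (P : Set V) (hentry : entry ∈ P) :
    (∀ u, ∃! q, ReachDef E (P ∪ DFplusSet E entry P) q u) ∧
    (∀ u q, ReachDef E (P ∪ DFplusSet E entry P) q u ↔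
      NearestSDom E entry (P ∪ DFplusSet E entry P) q u) ∧
    (∀ w ∈ P, w ∉ DFplusSet E entry P → ∀ q,
      (∃ u, E u w ∧ ReachDef E (P ∪ DFplusSet E entry P) q u) ↔
      (q ∈ P ∪ DFplusSet E entry P ∧ q ≠ w ∧ Dom E entry q w ∧
        ∀ r ∈ P ∪ DFplusSet E entry P, Dom E entry r w → r ≠ w →
          Dom E entry r q)) ∧
    (∀ w ∈ DFplusSet E entry P, ∀ q,
      (∃ u, E u w ∧ ReachDef E (P ∪ DFplusSet E entry P) q u) ↔
      (∃ u, E u w ∧ NearestSDom E entry (P ∪ DFplusSet E entry P) q u)) := by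
  have hSc : ∀ r ∈ P ∪ DFplusSet E entry P,
      DF E entry r ⊆ P ∪ DFplusSet E entry P := fun r hr => df_closed hr
  have hES : entry ∈ P ∪ DFplusSet E entry P := Or.inl hentry
  have h2 : ∀ u q, ReachDef E (P ∪ DFplusSet E entry P) q u ↔
      NearestSDom E entry (P ∪ DFplusSet E entry P) q u := fun u q =>
    ⟨reachdef_nearest hSc, nearest_reachdef hreach hSc hES⟩
  refine ⟨?_, h2, ?_, ?_⟩
  · intro u
    obtain ⟨x, hx⟩ := exists_reachdef hreach hES u
    exact ⟨x, hx, fun y hy =>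
      nearest_unique hreach ((h2 u y).mp hy) ((h2 u x).mp hx)⟩
  · intro w hwP hwDF q
    constructor
    · rintro ⟨u, hE, hrd⟩
      exact three_fwd hwDF hE hrd
    · rintro ⟨hqS, hqw, hdom, hnear⟩
      exact three_bwd hreach hwDF hqS hqw hdom hnear hES
  · intro w hw q
    exact exists_congr fun u => and_congr_right fun _ => h2 u q
end
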